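/- Let (G,B,m,w) be a connected weighted finite graph with boundary B, |B| ≥ 2 (no assumption that E(B,B)=∅). Then σ₂ ≥ w₀·V_B / ((V_B − m₀)² · d_B), where V_B = Σ_{x∈B} m_x, m₀ = min_{x∈B} m_x, w₀ = min_{e∈E} w_e, and d_B = max{d(x,y) : x,y ∈ B}. -/

import Mathlib

set_option maxHeartbeats 800000


open Finset

variable {V : Type*}

/-- The Dirichlet energy `⟨du,du⟩ = ∑_{{x,y}∈E} (u y - u x)^2 w_{xy}` of a function `u`,
where the edge weight `w` is symmetric and vanishes on non-adjacent pairs. -/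
noncomputable def energy [Fintype V] (w : V → V → ℝ) (u : V → ℝ) : ℝ :=
  (1 / 2) * ∑ x, ∑ y, (u y - u x) ^ 2 * w x y

/-- The Dirichlet pairing `⟨du,dv⟩ = ∑_{{x,y}∈E} (u y - u x)(v y - v x) w_{xy}`. -/
noncomputable def dirPairing [Fintype V] (w : V → V → ℝ) (u v : V → ℝ) : ℝ :=
  (1 / 2) * ∑ x, ∑ y, (u y - u x) * (v y - v x) * w x y

/-- The weighted graph Laplacian `Δu(x) = (1/m_x) ∑_y (u y - u x) w_{xy}`. -/
noncomputable def glap [Fintype V] (m : V → ℝ) (w : V → V → ℝ) (u : V → ℝ) (x : V) : ℝ :=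
  (1 / m x) * ∑ y, (u y - u x) * w x y

/-- `d_B`, the maximal graph distance between two boundary vertices. -/
noncomputable def boundaryDiam (G : SimpleGraph V) (B : Finset V) : ℕ :=
  (B ×ˢ B).sup fun p => G.dist p.1 p.2

/-- `w₀`, the minimal edge weight. -/
noncomputable def minEdgeWeight (G : SimpleGraph V) (w : V → V → ℝ) : ℝ :=
  sInf {r : ℝ | ∃ x y, G.Adj x y ∧ w x y = r}

/-- `m₀`, the minimal vertex measure on the boundary. -/
noncomputable def minBoundaryMeasure (B : Finset V) (m : V → ℝ) : ℝ :=
  sInf {r : ℝ | ∃ x ∈ B, m x = r}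

/-- The second Steklov eigenvalue `σ₂`, via its variational characterization: the infimum of
the Rayleigh quotients `E(u)/⟨u,u⟩_B` over functions `u` on `V` whose boundary values are
nonzero and have weighted mean zero.  (Since the harmonic extension minimizes the Dirichlet
energy among all extensions of given boundary data, this agrees with the second eigenvalue of
the Steklov operator.) -/
noncomputable def sigma2 [Fintype V] (B : Finset V) (m : V → ℝ) (w : V → V → ℝ) : ℝ :=
  sInf {r : ℝ | ∃ u : V → ℝ, (∃ x ∈ B, u x ≠ 0) ∧ (∑ x ∈ B, u x * m x = 0) ∧
    r = energy w u / ∑ x ∈ B, (u x) ^ 2 * m x}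


open SimpleGraph in
lemma walk_telescope {G : SimpleGraph V} (u : V → ℝ) {x y : V} (p : G.Walk x y) :
    (p.darts.map (fun d => u d.toProd.2 - u d.toProd.1)).sum = u y - u x := by
  induction p with
  | nil => simp
  | cons h q ih => rw [Walk.darts_cons, List.map_cons, List.sum_cons, ih]; ring

open SimpleGraph in
theorem rayleigh_key [Fintype V]
    (G : SimpleGraph V) (hG : G.Connected)
    (B : Finset V) (hB : 2 ≤ B.card)
    (m : V → ℝ) (w : V → V → ℝ)
    (hm : ∀ x, 0 < m x)
    (hw_symm : ∀ x y, w x y = w y x)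
    (hw_pos : ∀ x y, G.Adj x y → 0 < w x y)
    (hw_zero : ∀ x y, ¬ G.Adj x y → w x y = 0)
    (u : V → ℝ) (hunz : ∃ x ∈ B, u x ≠ 0) (hmean : ∑ x ∈ B, u x * m x = 0) :
    minEdgeWeight G w * (∑ x ∈ B, m x) /
        (((∑ x ∈ B, m x) - minBoundaryMeasure B m) ^ 2 * (boundaryDiam G B : ℝ))
      ≤ energy w u / ∑ x ∈ B, (u x) ^ 2 * m x := by
  classical
  have hw_nonneg : ∀ x y, 0 ≤ w x y := by
    intro x y
    by_cases h : G.Adj x y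
    · exact (hw_pos x y h).le
    · exact (hw_zero x y h).ge
  have hBne : B.Nonempty := Finset.card_pos.mp (by omega)
  obtain ⟨x₀, hx₀B, hx₀max⟩ := B.exists_max_image u hBne
  obtain ⟨y₀, hy₀B, hy₀min⟩ := B.exists_min_image u hBne
  set a : ℝ := u x₀ with ha_def
  set b : ℝ := -(u y₀) with hb_def
  -- positivity of a and b
  have ha : 0 < a := by
    by_contra hc
    push_neg at hc
    have h0 : ∀ x ∈ B, u x * m x ≤ 0 := fun x hx =>
      mul_nonpos_of_nonpos_of_nonneg (le_trans (hx₀max x hx) hc) (hm x).le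
    obtain ⟨z, hzB, hz⟩ := hunz
    have := (Finset.sum_eq_zero_iff_of_nonpos h0).mp hmean z hzB
    exact hz (by
      rcases mul_eq_zero.mp this with h | h
      · exact h
      · exact absurd h (hm z).ne')
  have hb : 0 < b := by
    by_contra hc
    push_neg at hc
    have hy0 : 0 ≤ u y₀ := by simpa [hb_def] using hc
    have h0 : ∀ x ∈ B, 0 ≤ u x * m x := fun x hx =>
      mul_nonneg (le_trans hy0 (hy₀min x hx)) (hm x).le
    obtain ⟨z, hzB, hz⟩ := hunz
    have := (Finset.sum_eq_zero_iff_of_nonneg h0).mp hmean z hzB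
    exact hz (by
      rcases mul_eq_zero.mp this with h | h
      · exact h
      · exact absurd h (hm z).ne')
  have hxy : x₀ ≠ y₀ := by
    intro h
    rw [h] at ha_def
    have : a = -b := by rw [ha_def, hb_def]; ring
    linarith
  -- the shortest path
  obtain ⟨q, hq⟩ := (hG.preconnected x₀ y₀).exists_walk_length_eq_dist
  set p : G.Walk x₀ y₀ := q.bypass with hp_def
  have hp : p.IsPath := q.bypass_isPath
  have hlen : p.length ≤ G.dist x₀ y₀ := hq ▸ q.length_bypass_le
  have hL1 : 1 ≤ p.length := by
    rcases Nat.eq_zero_or_pos p.length with h | h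
    · exact absurd (Walk.eq_of_length_eq_zero h) hxy
    · exact h
  have hdistB : G.dist x₀ y₀ ≤ boundaryDiam G B := by
    have : (x₀, y₀) ∈ B ×ˢ B := Finset.mem_product.mpr ⟨hx₀B, hy₀B⟩
    exact Finset.le_sup (f := fun p => G.dist p.1 p.2) this
  have hLd : p.length ≤ boundaryDiam G B := le_trans hlen hdistB
  have hdB1 : 1 ≤ boundaryDiam G B := le_trans hL1 hLd
  -- the dart finset
  have hnodd : p.darts.Nodup := Walk.darts_nodup_of_support_nodup hp.support_nodup
  have hnd : (p.darts.map Dart.toProd).Nodup := hnodd.map Dart.toProd_injective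
  set D : Finset (V × V) := (p.darts.map Dart.toProd).toFinset with hD_def
  have hcard : D.card = p.length := by
    rw [hD_def, List.toFinset_card_of_nodup hnd, List.length_map, Walk.length_darts]
  have hmemD : ∀ r ∈ D, ∃ d ∈ p.darts, d.toProd = r := by
    intro r hr
    rw [hD_def, List.mem_toFinset, List.mem_map] at hr
    exact hr
  have hadjD : ∀ r ∈ D, G.Adj r.1 r.2 := by
    intro r hr
    obtain ⟨d, _, rfl⟩ := hmemD r hr
    exact d.adj
  -- telescoping sum
  have hsumD : ∑ r ∈ D, (u r.2 - u r.1) = u y₀ - u x₀ := by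
    rw [hD_def, List.sum_toFinset _ hnd, List.map_map]
    exact walk_telescope u p
  -- Cauchy–Schwarz
  have hCS : (a + b) ^ 2 ≤ (p.length : ℝ) * ∑ r ∈ D, (u r.2 - u r.1) ^ 2 := by
    have h1 : (∑ r ∈ D, (u r.2 - u r.1)) ^ 2 ≤ (D.card : ℝ) * ∑ r ∈ D, (u r.2 - u r.1) ^ 2 :=
      sq_sum_le_card_mul_sum_sq
    rw [hsumD] at h1
    rw [← hcard]
    calc (a + b) ^ 2 = (u y₀ - u x₀) ^ 2 := by rw [ha_def, hb_def]; ring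
    _ ≤ _ := h1
  -- energy lower bound via distinct ordered pairs
  have henergyD : ∑ r ∈ D, (u r.2 - u r.1) ^ 2 * w r.1 r.2 ≤ energy w u := by
    set t : V × V → ℝ := fun r => (u r.2 - u r.1) ^ 2 * w r.1 r.2 with ht_def
    have ht_nonneg : ∀ r, 0 ≤ t r := fun r => mul_nonneg (sq_nonneg _) (hw_nonneg _ _)
    have ht_swap : ∀ r, t r.swap = t r := by
      intro r
      simp only [ht_def, Prod.swap]
      rw [hw_symm]
      ring
    set D' : Finset (V × V) := D.image Prod.swap with hD'_def
    have hdisj : Disjoint D D' := by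
      rw [Finset.disjoint_left]
      intro r hrD hrD'
      rw [hD'_def, Finset.mem_image] at hrD'
      obtain ⟨r', hr'D, hr'⟩ := hrD'
      obtain ⟨d1, hd1, hd1e⟩ := hmemD r hrD
      obtain ⟨d2, hd2, hd2e⟩ := hmemD r' hr'D
      have hedges : (p.darts.map Dart.edge).Nodup := hp.isTrail.edges_nodup
      have hinj := List.inj_on_of_nodup_map hedges hd1 hd2
      have hedge : d1.edge = d2.edge := by
        rw [Dart.edge, Dart.edge, hd1e, hd2e, ← hr']
        exact (Sym2.mk_prod_swap_eq).symm
      have hd12 : d1 = d2 := hinj hedge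
      have hrr : r = r' := by rw [← hd1e, hd12, hd2e]
      rw [← hrr] at hr'
      have h2 : r.2 = r.1 := congrArg Prod.fst hr'
      exact (hadjD r hrD).ne h2.symm
    have hsub : D ∪ D' ⊆ Finset.univ ×ˢ Finset.univ := by
      intro r _; simp
    have hswap_inj : Set.InjOn Prod.swap (D : Set (V × V)) :=
      Function.Injective.injOn Prod.swap_injective
    have hsum' : ∑ r ∈ D', t r = ∑ r ∈ D, t r := by
      rw [hD'_def, Finset.sum_image (fun x hx y hy h => hswap_inj hx hy h)]
      exact Finset.sum_congr rfl fun r _ => ht_swap r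
    have hle : ∑ r ∈ D ∪ D', t r ≤ ∑ r ∈ Finset.univ ×ˢ Finset.univ, t r :=
      Finset.sum_le_sum_of_subset_of_nonneg hsub fun r _ _ => ht_nonneg r
    rw [Finset.sum_union hdisj, hsum'] at hle
    have : energy w u = (1 / 2) * ∑ r ∈ Finset.univ ×ˢ Finset.univ, t r := by
      rw [energy, Finset.sum_product]
    rw [this]
    linarith
  -- minimal edge weight facts
  have hedge_ex : ∃ x y, G.Adj x y := by
    have : p.darts ≠ [] := by
      intro h
      have := congrArg List.length h
      rw [Walk.length_darts] at this
      simp at this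
      have h0 : p.darts.length = 0 := by rw [h]; rfl
      rw [Walk.length_darts] at h0; omega
    obtain ⟨d, hd⟩ := List.exists_mem_of_ne_nil _ this
    exact ⟨d.toProd.1, d.toProd.2, d.adj⟩
  set S : Set ℝ := {r : ℝ | ∃ x y, G.Adj x y ∧ w x y = r} with hS_def
  have hSfin : S.Finite := by
    apply Set.Finite.subset (Set.finite_range fun r : V × V => w r.1 r.2)
    rintro s ⟨x, y, _, rfl⟩
    exact ⟨(x, y), rfl⟩
  have hSne : S.Nonempty := by
    obtain ⟨x, y, h⟩ := hedge_ex
    exact ⟨w x y, x, y, h, rfl⟩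
  have hw0_mem : minEdgeWeight G w ∈ S := hSne.csInf_mem hSfin
  have hw0_pos : 0 < minEdgeWeight G w := by
    obtain ⟨x, y, hadj, he⟩ := hw0_mem
    rw [← he]
    exact hw_pos x y hadj
  have hw0_le : ∀ x y, G.Adj x y → minEdgeWeight G w ≤ w x y := fun x y h =>
    csInf_le hSfin.bddBelow ⟨x, y, h, rfl⟩
  -- minimal boundary measure facts
  set T : Set ℝ := {r : ℝ | ∃ x ∈ B, m x = r} with hT_def
  have hTfin : T.Finite := by
    apply Set.Finite.subset (Set.finite_range m)
    rintro s ⟨x, _, rfl⟩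
    exact ⟨x, rfl⟩
  have hTne : T.Nonempty := ⟨m x₀, x₀, hx₀B, rfl⟩
  have hm0_mem : minBoundaryMeasure B m ∈ T := hTne.csInf_mem hTfin
  have hm0_pos : 0 < minBoundaryMeasure B m := by
    obtain ⟨x, _, he⟩ := hm0_mem
    rw [← he]; exact hm x
  have hm0_le : ∀ x ∈ B, minBoundaryMeasure B m ≤ m x := fun x hx =>
    csInf_le hTfin.bddBelow ⟨x, hx, rfl⟩
  -- volume facts
  set Vb : ℝ := ∑ x ∈ B, m x with hVb_def
  have hVb_pos : 0 < Vb := Finset.sum_pos (fun x _ => hm x) hBne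
  have hVm : 2 * minBoundaryMeasure B m ≤ Vb := by
    obtain ⟨x₁, hx₁, x₂, hx₂, hne⟩ := Finset.one_lt_card.mp hB
    have hsub : {x₁, x₂} ⊆ B := by
      intro z hz
      rcases Finset.mem_insert.mp hz with rfl | hz
      · exact hx₁
      · rw [Finset.mem_singleton.mp hz]; exact hx₂
    have h1 : ∑ x ∈ ({x₁, x₂} : Finset V), m x ≤ Vb :=
      Finset.sum_le_sum_of_subset_of_nonneg hsub fun x _ _ => (hm x).le
    rw [Finset.sum_pair hne] at h1
    have := hm0_le x₁ hx₁
    have := hm0_le x₂ hx₂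
    linarith
  -- denominator facts
  set Den : ℝ := ∑ x ∈ B, (u x) ^ 2 * m x with hDen_def
  have hDen_pos : 0 < Den := by
    obtain ⟨z, hzB, hz⟩ := hunz
    apply Finset.sum_pos' (fun x _ => mul_nonneg (sq_nonneg _) (hm x).le)
    exact ⟨z, hzB, mul_pos (by positivity) (hm z)⟩
  have hDen_le : Den ≤ a * b * Vb := by
    have hpt : ∀ x ∈ B, (u x) ^ 2 * m x ≤ (a * b + (a - b) * u x) * m x := by
      intro x hx
      apply mul_le_mul_of_nonneg_right _ (hm x).le
      have h1 : u x ≤ a := hx₀max x hx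
      have h2 : -b ≤ u x := by
        have := hy₀min x hx
        rw [hb_def]; linarith
      nlinarith [mul_nonneg (sub_nonneg.mpr h1) (by linarith : (0:ℝ) ≤ u x + b)]
    calc Den ≤ ∑ x ∈ B, (a * b + (a - b) * u x) * m x := Finset.sum_le_sum hpt
    _ = a * b * Vb + (a - b) * ∑ x ∈ B, u x * m x := by
        rw [hVb_def, Finset.mul_sum, Finset.mul_sum, ← Finset.sum_add_distrib]
        apply Finset.sum_congr rfl
        intro x _
        ring
    _ = a * b * Vb := by rw [hmean]; ring
  -- energy lower bound
  set E : ℝ := energy w u with hE_def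
  have hE1 : minEdgeWeight G w * ∑ r ∈ D, (u r.2 - u r.1) ^ 2 ≤ E := by
    calc minEdgeWeight G w * ∑ r ∈ D, (u r.2 - u r.1) ^ 2
        = ∑ r ∈ D, minEdgeWeight G w * (u r.2 - u r.1) ^ 2 := Finset.mul_sum _ _ _
    _ ≤ ∑ r ∈ D, (u r.2 - u r.1) ^ 2 * w r.1 r.2 := by
        apply Finset.sum_le_sum
        intro r hr
        rw [mul_comm]
        exact mul_le_mul_of_nonneg_left (hw0_le r.1 r.2 (hadjD r hr)) (sq_nonneg _)
    _ ≤ E := henergyD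
  have hdB_pos : (0:ℝ) < (boundaryDiam G B : ℝ) := by exact_mod_cast hdB1
  have hE2 : minEdgeWeight G w * (a + b) ^ 2 / (boundaryDiam G B : ℝ) ≤ E := by
    rw [div_le_iff₀ hdB_pos]
    have hL_pos : (0:ℝ) < (p.length : ℝ) := by exact_mod_cast hL1
    have hsq : (a + b) ^ 2 ≤ (boundaryDiam G B : ℝ) * ∑ r ∈ D, (u r.2 - u r.1) ^ 2 := by
      have hsum_nonneg : (0:ℝ) ≤ ∑ r ∈ D, (u r.2 - u r.1) ^ 2 :=
        Finset.sum_nonneg fun r _ => sq_nonneg _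
      have hcast : (p.length : ℝ) ≤ (boundaryDiam G B : ℝ) := by exact_mod_cast hLd
      calc (a + b) ^ 2 ≤ (p.length : ℝ) * ∑ r ∈ D, (u r.2 - u r.1) ^ 2 := hCS
      _ ≤ _ := mul_le_mul_of_nonneg_right hcast hsum_nonneg
    calc minEdgeWeight G w * (a + b) ^ 2
        ≤ minEdgeWeight G w * ((boundaryDiam G B : ℝ) * ∑ r ∈ D, (u r.2 - u r.1) ^ 2) :=
          mul_le_mul_of_nonneg_left hsq hw0_pos.le
    _ = (minEdgeWeight G w * ∑ r ∈ D, (u r.2 - u r.1) ^ 2) * (boundaryDiam G B : ℝ) := by ring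
    _ ≤ E * (boundaryDiam G B : ℝ) := mul_le_mul_of_nonneg_right hE1 hdB_pos.le
  -- final comparison
  set m₀ : ℝ := minBoundaryMeasure B m with hm0_def
  have hVm0_pos : 0 < Vb - m₀ := by linarith
  set c : ℝ := minEdgeWeight G w * Vb / ((Vb - m₀) ^ 2 * (boundaryDiam G B : ℝ)) with hc_def
  have hc_pos : 0 < c := by
    apply div_pos (mul_pos hw0_pos hVb_pos)
    exact mul_pos (by positivity) hdB_pos
  rw [le_div_iff₀ hDen_pos]
  have hDen_le2 : Den ≤ (a + b) ^ 2 * (Vb - m₀) ^ 2 / Vb := by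
    rw [le_div_iff₀ hVb_pos]
    have h4 : 4 * (a * b) ≤ (a + b) ^ 2 := by nlinarith [sq_nonneg (a - b)]
    have hV2 : Vb ≤ 2 * (Vb - m₀) := by linarith
    have hVb2 : Vb ^ 2 ≤ 4 * (Vb - m₀) ^ 2 := by nlinarith [hV2, hVb_pos]
    have e1 : a * b * Vb ^ 2 ≤ a * b * (4 * (Vb - m₀) ^ 2) :=
      mul_le_mul_of_nonneg_left hVb2 (mul_pos ha hb).le
    have e2 : 4 * (a * b) * (Vb - m₀) ^ 2 ≤ (a + b) ^ 2 * (Vb - m₀) ^ 2 :=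
      mul_le_mul_of_nonneg_right h4 (sq_nonneg _)
    calc Den * Vb ≤ (a * b * Vb) * Vb := mul_le_mul_of_nonneg_right hDen_le hVb_pos.le
    _ ≤ (a + b) ^ 2 * (Vb - m₀) ^ 2 := by nlinarith [e1, e2]
  calc c * Den ≤ c * ((a + b) ^ 2 * (Vb - m₀) ^ 2 / Vb) :=
      mul_le_mul_of_nonneg_left hDen_le2 hc_pos.le
  _ = minEdgeWeight G w * (a + b) ^ 2 / (boundaryDiam G B : ℝ) := by
      rw [hc_def]
      field_simp
  _ ≤ E := hE2

/-- **Extension of Perrin's bound to general weights** (Theorem 1.3).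
For a connected weighted finite graph with boundary `B`, `|B| ≥ 2` (no assumption that
`E(B,B) = ∅`), one has `σ₂ ≥ w₀ V_B / ((V_B - m₀)² d_B)` where `V_B = ∑_{x∈B} m_x`,
`m₀ = min_{x∈B} m_x` and `w₀ = min_{e∈E} w_e`. -/
theorem extended_perrin_lower_bound [Fintype V]
    (G : SimpleGraph V) (hG : G.Connected)
    (B : Finset V) (hB : 2 ≤ B.card)
    (m : V → ℝ) (w : V → V → ℝ)
    (hm : ∀ x, 0 < m x)
    (hw_symm : ∀ x y, w x y = w y x)
    (hw_pos : ∀ x y, G.Adj x y → 0 < w x y)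
    (hw_zero : ∀ x y, ¬ G.Adj x y → w x y = 0) :
    sigma2 B m w ≥
      minEdgeWeight G w * (∑ x ∈ B, m x) /
        (((∑ x ∈ B, m x) - minBoundaryMeasure B m) ^ 2 * (boundaryDiam G B : ℝ)) := by
  classical
  rw [ge_iff_le, sigma2]
  apply le_csInf
  · obtain ⟨x₁, hx₁, x₂, hx₂, hne⟩ := Finset.one_lt_card.mp hB
    set u₀ : V → ℝ := fun z => if z = x₁ then m x₂ else if z = x₂ then -(m x₁) else 0 with hu₀
    refine ⟨energy w u₀ / ∑ x ∈ B, (u₀ x) ^ 2 * m x, u₀, ⟨x₁, hx₁, ?_⟩, ?_, rfl⟩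
    · simpa [hu₀] using (hm x₂).ne'
    · have hsub : ({x₁, x₂} : Finset V) ⊆ B := by
        intro z hz
        rcases Finset.mem_insert.mp hz with rfl | hz
        · exact hx₁
        · rw [Finset.mem_singleton.mp hz]; exact hx₂
      rw [← Finset.sum_subset hsub]
      · rw [Finset.sum_pair hne]
        have h1 : u₀ x₁ = m x₂ := by simp [hu₀]
        have h2 : u₀ x₂ = -(m x₁) := by simp [hu₀, Ne.symm hne]
        rw [h1, h2]; ring
      · intro x _ hxp
        have hx1 : x ≠ x₁ := fun h => hxp (by rw [h]; exact Finset.mem_insert_self _ _)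
        have hx2 : x ≠ x₂ := fun h => hxp (by
          rw [h]; exact Finset.mem_insert_of_mem (Finset.mem_singleton_self _))
        simp [hu₀, hx1, hx2]
  · rintro r ⟨u, hunz, hmean, rfl⟩
    exact rayleigh_key G hG B hB m w hm hw_symm hw_pos hw_zero u hunz hmean
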